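/- Let V = F_q^n and let F be a family of subspaces with diam(F) ≤ d, where n ≥ d+1. Then for every 0 ≤ k < n−k, |F(k)| + |F(n−k)| ≤ C_q(n,k). Moreover, equality holds if and only if one of the two layers is empty and the other consists of all subspaces of the corresponding dimension. -/

import Mathlib

open Module

/-- The subspace distance `Δ(U,W) = dim U + dim W − 2 dim(U∩W)`. -/
noncomputable def sdelta (K V : Type*) [Field K] [AddCommGroup V] [Module K V]
    (U W : Submodule K V) : ℕ :=
  finrank K ↥U + finrank K ↥W - 2 * finrank K ↥(U ⊓ W)

/-- The Gaussian binomial coefficient, via the `q`-Pascal recursion. -/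
def gauss (q : ℕ) : ℕ → ℕ → ℕ
  | _, 0 => 1
  | 0, _ + 1 => 0
  | n + 1, k + 1 => gauss q n k + q ^ (k + 1) * gauss q n (k + 1)

section Aux

set_option linter.unusedSectionVars false

variable {K : Type*} [Field K] [Fintype K] {V : Type*} [AddCommGroup V] [Module K V]

/- ### Generic counting helpers -/

lemma aux_card_fd (V : Type*) [AddCommGroup V] [Module K V] [FiniteDimensional K V] :
    Nat.card V = (Fintype.card K) ^ (finrank K V) := by
  have : Finite V := Module.finite_of_finite K
  have : Fintype V := Fintype.ofFinite V
  rw [Nat.card_eq_fintype_card, card_eq_pow_finrank (K := K)]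

lemma aux_card_sigma_const {ι : Type*} [Finite ι] (g : ι → Type*) [∀ i, Finite (g i)] (c : ℕ)
    (h : ∀ i, Nat.card (g i) = c) : Nat.card (Σ i, g i) = Nat.card ι * c := by
  classical
  have : Fintype ι := Fintype.ofFinite ι
  have : ∀ i, Fintype (g i) := fun i => Fintype.ofFinite _
  rw [Nat.card_eq_fintype_card, Fintype.card_sigma, Nat.card_eq_fintype_card,
    ← Finset.card_univ]
  have h' : ∀ i : ι, Fintype.card (g i) = c := fun i => by
    rw [← h i, Nat.card_eq_fintype_card]
  simp [h', Finset.sum_const, Finset.card_univ, mul_comm]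

lemma aux_card_fibers {α β : Type*} [Finite β] (f : α → β) [Finite α] (c : ℕ)
    (h : ∀ b, Nat.card {a // f a = b} = c) : Nat.card α = Nat.card β * c := by
  classical
  have : Fintype β := Fintype.ofFinite β
  have : Fintype α := Fintype.ofFinite α
  rw [← Nat.card_congr (Equiv.sigmaFiberEquiv f)]
  have : ∀ b, Fintype {a // f a = b} := fun b => Fintype.ofFinite _
  rw [Nat.card_eq_fintype_card, Fintype.card_sigma, Nat.card_eq_fintype_card,
    ← Finset.card_univ]
  have h' : ∀ b : β, Fintype.card {a // f a = b} = c := fun b => by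
    rw [← h b, Nat.card_eq_fintype_card]
  simp [h', Finset.sum_const, Finset.card_univ, mul_comm]

variable (K V) in
lemma aux_finite_submodule [Finite V] : Finite (Submodule K V) :=
  Finite.of_injective (fun p => (p : Set V)) SetLike.coe_injective

/- ### Counting linearly independent tuples -/

def snocEquiv (j : ℕ) : {v : Fin (j+1) → V // LinearIndependent K v} ≃
    Σ u : {v : Fin j → V // LinearIndependent K v},
      {x : V // x ∉ Submodule.span K (Set.range u.1)} where
  toFun v := ⟨⟨Fin.init v.1, ((linearIndependent_fin_snoc (v := Fin.init v.1)
      (x := v.1 (Fin.last j))).mp (by rw [Fin.snoc_init_self]; exact v.2)).1⟩,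
    ⟨v.1 (Fin.last j), ((linearIndependent_fin_snoc).mp
      (by rw [Fin.snoc_init_self]; exact v.2)).2⟩⟩
  invFun u := ⟨Fin.snoc u.1.1 u.2.1, linearIndependent_fin_snoc.mpr ⟨u.1.2, u.2.2⟩⟩
  left_inv v := by ext : 1; exact Fin.snoc_init_self v.1
  right_inv u := by
    obtain ⟨⟨u1, hu1⟩, ⟨x, hx⟩⟩ := u
    have h1 : Fin.init (Fin.snoc u1 x : Fin (j+1) → V) = u1 := by simp
    refine Sigma.ext (Subtype.ext h1) ((Subtype.heq_iff_coe_eq ?_).mpr (by simp))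
    intro y
    simp only [h1]

lemma aux_card_li [FiniteDimensional K V] (j : ℕ) :
    Nat.card {v : Fin j → V // LinearIndependent K v} =
      ∏ i ∈ Finset.range j, ((Fintype.card K) ^ (finrank K V) - (Fintype.card K) ^ i) := by
  have hfin : Finite V := Module.finite_of_finite K
  induction j with
  | zero =>
      rw [Finset.range_zero, Finset.prod_empty]
      have : ∀ v : Fin 0 → V, LinearIndependent K v := fun v =>
        linearIndependent_empty_type
      rw [Nat.card_eq_one_iff_unique.mpr]
      constructor
      · constructor
        intro a b
        ext i
        exact absurd i.2 (Nat.not_lt_zero _)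
      · exact ⟨⟨Fin.elim0, this _⟩⟩
  | succ j ih =>
      rw [Nat.card_congr (snocEquiv j), Finset.prod_range_succ, ← ih]
      have key : ∀ u : {v : Fin j → V // LinearIndependent K v},
          Nat.card {x : V // x ∉ Submodule.span K (Set.range u.1)} =
            (Fintype.card K) ^ (finrank K V) - (Fintype.card K) ^ j := by
        rintro ⟨u, hu⟩
        classical
        have : Fintype V := Fintype.ofFinite V
        rw [Nat.card_eq_fintype_card, Fintype.card_subtype_compl]
        congr 1
        · exact card_eq_pow_finrank (K := K)
        · rw [← Nat.card_eq_fintype_card]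
          have : Nat.card {x : V // x ∈ Submodule.span K (Set.range u)}
              = Nat.card ↥(Submodule.span K (Set.range u)) := rfl
          rw [this, aux_card_fd (K := K), finrank_span_eq_card hu, Fintype.card_fin]
      rw [aux_card_sigma_const _ _ key]

/- ### Counting the Grassmannian -/

def fiberEquiv [FiniteDimensional K V] (j : ℕ) (W : Submodule K V) (hW : finrank K W = j)
    (f : {v : Fin j → V // LinearIndependent K v} → {W : Submodule K V // finrank K W = j})
    (hf : ∀ v, (f v).1 = Submodule.span K (Set.range v.1)) :
    {v : {v : Fin j → V // LinearIndependent K v} // f v = ⟨W, hW⟩} ≃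
      {u : Fin j → W // LinearIndependent K u} where
  toFun v := ⟨fun i => ⟨v.1.1 i, by
      have h := congrArg Subtype.val v.2
      rw [hf] at h
      have hm : v.1.1 i ∈ Submodule.span K (Set.range v.1.1) :=
        Submodule.subset_span (Set.mem_range_self i)
      rw [h] at hm
      exact hm⟩,
    LinearIndependent.of_comp W.subtype v.1.2⟩
  invFun u := ⟨⟨fun i => (u.1 i : V), u.2.map' W.subtype W.ker_subtype⟩, by
    have hsp : Submodule.span K (Set.range u.1) = ⊤ := by
      apply Submodule.eq_top_of_finrank_eq
      rw [finrank_span_eq_card u.2, Fintype.card_fin, hW]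
    apply Subtype.ext
    rw [hf]
    show Submodule.span K (Set.range (W.subtype ∘ u.1)) = W
    rw [Set.range_comp, Submodule.span_image, hsp, Submodule.map_subtype_top]⟩
  left_inv v := by apply Subtype.ext; apply Subtype.ext; rfl
  right_inv u := by apply Subtype.ext; funext i; rfl

lemma aux_card_grass_mul [FiniteDimensional K V] (j : ℕ) :
    Nat.card {W : Submodule K V // finrank K W = j} *
        ∏ i ∈ Finset.range j, ((Fintype.card K) ^ j - (Fintype.card K) ^ i) =
      ∏ i ∈ Finset.range j, ((Fintype.card K) ^ (finrank K V) - (Fintype.card K) ^ i) := by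
  classical
  have hfin : Finite V := Module.finite_of_finite K
  have := aux_finite_submodule K V
  set f : {v : Fin j → V // LinearIndependent K v} → {W : Submodule K V // finrank K W = j} :=
    fun v => ⟨Submodule.span K (Set.range v.1), by
      rw [finrank_span_eq_card v.2, Fintype.card_fin]⟩ with hfdef
  rw [← aux_card_li (V := V) j, aux_card_fibers f _ (fun W => ?_)]
  rcases W with ⟨W, hW⟩
  rw [Nat.card_congr (fiberEquiv j W hW f (fun v => rfl)), aux_card_li (V := W) j, hW]

/- ### The numeric `q`-binomial identity -/

def Fz (q m j : ℕ) : ℤ := ∏ i ∈ Finset.range j, ((q:ℤ)^m - (q:ℤ)^i)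

lemma Fz_succ (q m j : ℕ) : Fz q m (j+1) = Fz q m j * ((q:ℤ)^m - (q:ℤ)^j) :=
  Finset.prod_range_succ _ _

lemma Fz_succ' (q m j : ℕ) : Fz q (m+1) (j+1) = (q:ℤ)^j * ((q:ℤ)^(m+1) - 1) * Fz q m j := by
  rw [Fz, Finset.prod_range_succ']
  have h : ∀ i ∈ Finset.range j, (q:ℤ)^(m+1) - (q:ℤ)^(i+1) = (q:ℤ) * ((q:ℤ)^m - (q:ℤ)^i) := by
    intro i _; ring
  rw [Finset.prod_congr rfl h, Finset.prod_mul_distrib, Finset.prod_const, Finset.card_range]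
  show ((q:ℤ)^j * Fz q m j) * ((q:ℤ)^(m+1) - (q:ℤ)^0) = _
  ring

lemma Fz_zero_of (q j : ℕ) (hj : 0 < j) : Fz q 0 j = 0 := by
  apply Finset.prod_eq_zero (Finset.mem_range.mpr hj)
  simp

lemma gauss_formula (q : ℕ) : ∀ n k, (gauss q n k : ℤ) * Fz q k k = Fz q n k := by
  intro n
  induction n with
  | zero =>
      intro k
      cases k with
      | zero => simp [gauss, Fz]
      | succ j => simp [gauss, Fz_zero_of q (j+1) (Nat.succ_pos j)]
  | succ n ih =>
      intro k
      cases k with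
      | zero => simp [gauss, Fz]
      | succ j =>
          show ((gauss q n j + q ^ (j + 1) * gauss q n (j + 1) : ℕ) : ℤ) * _ = _
          have h1 := ih j
          have h2 := ih (j+1)
          rw [Fz_succ q n j, Fz_succ' q j j] at h2
          push_cast
          rw [Fz_succ' q j j, Fz_succ' q n j]
          linear_combination ((q:ℤ)^j * ((q:ℤ)^(j+1) - 1)) * h1 + (q:ℤ)^(j+1) * h2

lemma aux_cast_prod_pow (q : ℕ) (hq : 1 ≤ q) {m j : ℕ} (hj : j ≤ m) :
    ((∏ i ∈ Finset.range j, (q ^ m - q ^ i) : ℕ) : ℤ) = Fz q m j := by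
  rw [Nat.cast_prod, Fz]
  apply Finset.prod_congr rfl
  intro i hi
  have hi' : i ≤ m := le_trans (le_of_lt (Finset.mem_range.mp hi)) hj
  push_cast [Nat.pow_le_pow_right hq hi']
  ring

lemma Fz_diag_ne_zero (q j : ℕ) (hq : 2 ≤ q) : Fz q j j ≠ 0 := by
  rw [Fz]
  apply Finset.prod_ne_zero_iff.mpr
  intro i hi
  have h1 : q ^ i < q ^ j := Nat.pow_lt_pow_right hq (Finset.mem_range.mp hi)
  have h2 : (q:ℤ)^i < (q:ℤ)^j := by exact_mod_cast h1
  omega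

lemma aux_card_grass [FiniteDimensional K V] (j : ℕ) (hj : j ≤ finrank K V) :
    Nat.card {W : Submodule K V // finrank K W = j}
      = gauss (Fintype.card K) (finrank K V) j := by
  set q := Fintype.card K with hq
  have hq2 : 2 ≤ q := Fintype.one_lt_card
  have key := congrArg (fun x : ℕ => (x : ℤ)) (aux_card_grass_mul (K := K) (V := V) j)
  simp only [Nat.cast_mul] at key
  rw [aux_cast_prod_pow q (by omega) (le_refl j), aux_cast_prod_pow q (by omega) hj] at key
  have hgf := gauss_formula q (finrank K V) j
  have hne := Fz_diag_ne_zero q j hq2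
  have heq : (Nat.card {W : Submodule K V // finrank K W = j} : ℤ)
      = (gauss q (finrank K V) j : ℤ) := by
    apply mul_right_cancel₀ hne
    rw [key, hgf]
  exact_mod_cast heq

/- ### Counting complements -/

noncomputable def projEquiv (A B₀ : Submodule K V) (hc : IsCompl A B₀) :
    {f : V →ₗ[K] A // ∀ x : A, f x = x} ≃ (B₀ →ₗ[K] A) where
  toFun f := f.1.comp B₀.subtype
  invFun g := ⟨(A.projectionOnto B₀ hc) + g.comp (B₀.projectionOnto A hc.symm), by
    intro x
    simp only [LinearMap.add_apply, LinearMap.comp_apply]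
    rw [Submodule.projectionOnto_apply_left hc x,
      Submodule.projectionOnto_apply_of_mem_right hc.symm x.2, map_zero, add_zero]⟩
  left_inv f := by
    apply Subtype.ext
    apply LinearMap.ext
    intro v
    simp only [LinearMap.add_apply, LinearMap.comp_apply, Submodule.subtype_apply]
    have hdec := Submodule.projection_add_projection_eq_self hc v
    rw [Submodule.projection_apply, Submodule.projection_apply] at hdec
    have : f.1 v = f.1 ((A.projectionOnto B₀ hc v : V) +
        (B₀.projectionOnto A hc.symm v : V)) := by rw [hdec]
    rw [this, map_add, f.2 (A.projectionOnto B₀ hc v)]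
  right_inv g := by
    apply LinearMap.ext
    intro b
    simp only [LinearMap.comp_apply, Submodule.subtype_apply, LinearMap.add_apply]
    rw [Submodule.projectionOnto_apply_of_mem_right hc b.2,
      Submodule.projectionOnto_apply_left hc.symm b, zero_add]

lemma aux_card_compl [FiniteDimensional K V] (A : Submodule K V) :
    Nat.card {B : Submodule K V // IsCompl A B} =
      (Fintype.card K) ^ (finrank K A * (finrank K V - finrank K A)) := by
  obtain ⟨B₀, hc⟩ := Submodule.exists_isCompl A
  rw [Nat.card_congr ((A.isComplEquivProj).trans (projEquiv A B₀ hc))]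
  have h1 : Nat.card (B₀ →ₗ[K] A) = (Fintype.card K) ^ (finrank K (B₀ →ₗ[K] A)) := by
    have : Finite (B₀ →ₗ[K] A) := Module.finite_of_finite K
    have : Fintype (B₀ →ₗ[K] A) := Fintype.ofFinite _
    rw [Nat.card_eq_fintype_card, card_eq_pow_finrank (K := K)]
  rw [h1, Module.finrank_linearMap]
  have hsum : finrank K A + finrank K B₀ = finrank K V := Submodule.finrank_add_eq_of_isCompl hc
  have hB : finrank K B₀ = finrank K V - finrank K A := by omega
  rw [hB, mul_comm]

/- ### Counting complemented pairs over a family -/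

lemma aux_card_pairs_fst [FiniteDimensional K V] [Finite V] (S : Set (Submodule K V)) (k : ℕ)
    (hS : ∀ A ∈ S, finrank K A = k) :
    {p : Submodule K V × Submodule K V | p.1 ∈ S ∧ IsCompl p.1 p.2}.ncard =
      S.ncard * (Fintype.card K) ^ (k * (finrank K V - k)) := by
  have := aux_finite_submodule K V
  rw [← Nat.card_coe_set_eq, ← Nat.card_coe_set_eq]
  have e : ∀ (A : ↥S),
      {p : ↥{p : Submodule K V × Submodule K V | p.1 ∈ S ∧ IsCompl p.1 p.2} //
        p.1.1 = (A : Submodule K V)} ≃ {B : Submodule K V // IsCompl (A : Submodule K V) B} := by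
    intro A
    exact {
      toFun := fun p => ⟨p.1.1.2, by
        have h := p.1.2.2
        rw [p.2] at h
        exact h⟩
      invFun := fun B => ⟨⟨((A : Submodule K V), B.1), A.2, B.2⟩, rfl⟩
      left_inv := fun p => by
        apply Subtype.ext
        apply Subtype.ext
        exact Prod.ext p.2.symm rfl
      right_inv := fun B => rfl }
  rw [aux_card_fibers (fun p : ↥{p : Submodule K V × Submodule K V | p.1 ∈ S ∧ IsCompl p.1 p.2} =>
    (⟨p.1.1, p.2.1⟩ : ↥S)) ((Fintype.card K) ^ (k * (finrank K V - k))) ?_]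
  intro A
  have e2 : {a : ↥{p : Submodule K V × Submodule K V | p.1 ∈ S ∧ IsCompl p.1 p.2} //
      (⟨a.1.1, a.2.1⟩ : ↥S) = A} ≃ {p : ↥{p : Submodule K V × Submodule K V |
        p.1 ∈ S ∧ IsCompl p.1 p.2} // p.1.1 = (A : Submodule K V)} := by
    apply Equiv.subtypeEquivRight
    intro p
    constructor
    · intro h; exact congrArg Subtype.val h
    · intro h; exact Subtype.ext h
  rw [Nat.card_congr (e2.trans (e A)), aux_card_compl (↑A : Submodule K V), hS A A.2]

lemma aux_card_pairs_snd [FiniteDimensional K V] [Finite V] (S : Set (Submodule K V)) (m : ℕ)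
    (hS : ∀ B ∈ S, finrank K B = m) :
    {p : Submodule K V × Submodule K V | p.2 ∈ S ∧ IsCompl p.1 p.2}.ncard =
      S.ncard * (Fintype.card K) ^ (m * (finrank K V - m)) := by
  have := aux_finite_submodule K V
  have hswap : {p : Submodule K V × Submodule K V | p.2 ∈ S ∧ IsCompl p.1 p.2} =
      Prod.swap '' {p : Submodule K V × Submodule K V | p.1 ∈ S ∧ IsCompl p.1 p.2} := by
    ext p
    rw [Set.image_swap_eq_preimage_swap]
    show p.2 ∈ S ∧ IsCompl p.1 p.2 ↔ p.2 ∈ S ∧ IsCompl p.2 p.1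
    exact and_congr_right (fun _ => isCompl_comm)
  rw [hswap, Set.ncard_image_of_injective _ Prod.swap_injective]
  exact aux_card_pairs_fst S m hS

/- ### Common complements -/

lemma exists_notMem_two (P Q : Submodule K V) (hP : P ≠ ⊤) (hQ : Q ≠ ⊤) :
    ∃ v, v ∉ P ∧ v ∉ Q := by
  by_contra h
  push_neg at h
  have h' : ∀ v, v ∈ P ∨ v ∈ Q := fun v => by
    by_cases hv : v ∈ P
    · exact Or.inl hv
    · exact Or.inr (h v hv)
  by_cases hPQ : P ≤ Q
  · exact hQ (Submodule.eq_top_iff'.mpr fun v => (h' v).elim (fun hv => hPQ hv) id)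
  by_cases hQP : Q ≤ P
  · exact hP (Submodule.eq_top_iff'.mpr fun v => (h' v).elim id (fun hv => hQP hv))
  obtain ⟨u, huP, huQ⟩ := SetLike.not_le_iff_exists.mp hPQ
  obtain ⟨w, hwQ, hwP⟩ := SetLike.not_le_iff_exists.mp hQP
  rcases h' (u + w) with hc | hc
  · exact hwP (by simpa using P.sub_mem hc huP)
  · exact huQ (by simpa using Q.sub_mem hc hwQ)

lemma isCompl_of_disjoint [FiniteDimensional K V] {U C : Submodule K V}
    (hd : Disjoint U C) (hr : finrank K U + finrank K C = finrank K V) : IsCompl U C := by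
  refine ⟨hd, codisjoint_iff.mpr ?_⟩
  apply Submodule.eq_top_of_finrank_eq
  have h := Submodule.finrank_sup_add_finrank_inf_eq U C
  rw [disjoint_iff.mp hd, finrank_bot] at h
  omega

lemma common_compl_aux [FiniteDimensional K V] :
    ∀ j (U W : Submodule K V), finrank K U + j ≤ finrank K V →
      finrank K W + j ≤ finrank K V →
      ∃ C : Submodule K V, Disjoint U C ∧ Disjoint W C ∧ finrank K C = j := by
  intro j
  induction j with
  | zero => exact fun U W _ _ => ⟨⊥, disjoint_bot_right, disjoint_bot_right, finrank_bot K V⟩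
  | succ j ih =>
      intro U W hU hW
      obtain ⟨C, hUC, hWC, hC⟩ := ih U W (by omega) (by omega)
      have hne : ∀ (X : Submodule K V), finrank K X + j + 1 ≤ finrank K V →
          Disjoint X C → X ⊔ C ≠ ⊤ := by
        intro X hX hXC htop
        have h := Submodule.finrank_sup_add_finrank_inf_eq X C
        rw [disjoint_iff.mp hXC, finrank_bot, htop, finrank_top K V, hC] at h
        omega
      obtain ⟨v, hvU, hvW⟩ := exists_notMem_two (U ⊔ C) (W ⊔ C)
        (hne U (by omega) hUC) (hne W (by omega) hWC)
      have hv0 : v ≠ 0 := fun h => hvU (h ▸ Submodule.zero_mem _)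
      have hvC : v ∉ C := fun h => hvU (Submodule.mem_sup_right h)
      have hdisj : ∀ (X : Submodule K V), Disjoint X C → v ∉ X ⊔ C →
          Disjoint X (C ⊔ K ∙ v) := by
        intro X hXC hv
        rw [Submodule.disjoint_def]
        intro x hxX hx
        obtain ⟨c, hc, y, hy, hcy⟩ := Submodule.mem_sup.mp hx
        obtain ⟨a, rfl⟩ := Submodule.mem_span_singleton.mp hy
        by_cases ha : a = 0
        · rw [ha, zero_smul, add_zero] at hcy
          exact (Submodule.disjoint_def.mp hXC) x hxX (hcy ▸ hc)
        · exfalso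
          apply hv
          have : v = a⁻¹ • (x - c) := by
            rw [← hcy]; simp [smul_smul, inv_mul_cancel₀ ha]
          rw [this]
          exact Submodule.smul_mem _ _ (Submodule.sub_mem _
            (Submodule.mem_sup_left hxX) (Submodule.mem_sup_right hc))
      refine ⟨C ⊔ K ∙ v, hdisj U hUC hvU, hdisj W hWC hvW, ?_⟩
      have hdCv : Disjoint C (K ∙ v) := by
        rw [Submodule.disjoint_def]
        intro x hxC hx
        obtain ⟨a, rfl⟩ := Submodule.mem_span_singleton.mp hx
        by_cases ha : a = 0
        · rw [ha, zero_smul]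
        · exact absurd (by simpa [smul_smul, inv_mul_cancel₀ ha]
            using Submodule.smul_mem C a⁻¹ hxC) hvC
      have h := Submodule.finrank_sup_add_finrank_inf_eq C (K ∙ v)
      rw [disjoint_iff.mp hdCv, finrank_bot, hC, finrank_span_singleton hv0] at h
      omega

lemma common_compl [FiniteDimensional K V] {U W : Submodule K V}
    (h : finrank K U = finrank K W) : ∃ C, IsCompl U C ∧ IsCompl W C := by
  have hU := Submodule.finrank_le U
  obtain ⟨C, h1, h2, h3⟩ := common_compl_aux (finrank K V - finrank K U) U W
    (by omega) (by omega)
  exact ⟨C, isCompl_of_disjoint h1 (by omega), isCompl_of_disjoint h2 (by omega)⟩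

end Aux

/-- in a family of subspaces of `F_q^n` of diameter at most `d`
with `n ≥ d+1`, for every `0 ≤ k < n−k` one has
`|F(k)| + |F(n−k)| ≤ C_q(n,k)`, with equality iff one layer is empty and the
other consists of all subspaces of the corresponding dimension. -/
theorem complementary_layers_trivial_bound (q n d k : ℕ) (K : Type*) [Field K]
    [Fintype K] (hq : Fintype.card K = q) (hn : d + 1 ≤ n) (hk : k < n - k)
    (F : Set (Submodule K (Fin n → K)))
    (hdiam : ∀ A ∈ F, ∀ B ∈ F, sdelta K (Fin n → K) A B ≤ d) :
    {A ∈ F | finrank K ↥A = k}.ncard + {A ∈ F | finrank K ↥A = n - k}.ncard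
      ≤ gauss q n k ∧
    ({A ∈ F | finrank K ↥A = k}.ncard + {A ∈ F | finrank K ↥A = n - k}.ncard
        = gauss q n k ↔
      ({A ∈ F | finrank K ↥A = k} = {A : Submodule K (Fin n → K) | finrank K ↥A = k}
          ∧ {A ∈ F | finrank K ↥A = n - k} = ∅) ∨
      ({A ∈ F | finrank K ↥A = k} = ∅
          ∧ {A ∈ F | finrank K ↥A = n - k}
            = {A : Submodule K (Fin n → K) | finrank K ↥A = n - k})) := by
  have nV : finrank K (Fin n → K) = n := Module.finrank_fin_fun K
  have hfinS := aux_finite_submodule K (Fin n → K)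
  have hkn : k ≤ n := by omega
  set X := {A ∈ F | finrank K ↥A = k} with hX
  set Y := {A ∈ F | finrank K ↥A = n - k} with hY
  set Gk : Set (Submodule K (Fin n → K)) := {A | finrank K ↥A = k} with hGk
  set Gnk : Set (Submodule K (Fin n → K)) := {A | finrank K ↥A = n - k} with hGnk
  set c : ℕ := (Fintype.card K) ^ (k * (n - k)) with hc
  have hcpos : 0 < c := pow_pos Fintype.card_pos _
  have hcross : ∀ A ∈ X, ∀ B ∈ Y, ¬ IsCompl A B := by
    rintro A ⟨hAF, hAr⟩ B ⟨hBF, hBr⟩ hcompl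
    have hd := hdiam A hAF B hBF
    have hinf : A ⊓ B = ⊥ := disjoint_iff.mp hcompl.disjoint
    have hsd : sdelta K (Fin n → K) A B = n := by
      unfold sdelta
      rw [hAr, hBr, hinf, finrank_bot K (Fin n → K)]
      omega
    omega
  have hexp : (n - k) * (n - (n - k)) = k * (n - k) := by
    have h : n - (n - k) = k := by omega
    rw [h, mul_comm]
  set Ts : Set (Submodule K (Fin n → K) × Submodule K (Fin n → K)) :=
    {p | p.1 ∈ Gk ∧ IsCompl p.1 p.2} with hTs
  have hTk : Ts.ncard = Gk.ncard * c := by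
    have := aux_card_pairs_fst Gk k (fun A hA => hA)
    rw [nV] at this
    exact this
  have hTs2 : Ts = {p | p.2 ∈ Gnk ∧ IsCompl p.1 p.2} := by
    ext p
    constructor
    · rintro ⟨h1, h2⟩
      have := Submodule.finrank_add_eq_of_isCompl h2
      rw [nV] at this
      have h1' : finrank K ↥p.1 = k := h1
      exact ⟨by show finrank K ↥p.2 = n - k; omega, h2⟩
    · rintro ⟨h1, h2⟩
      have := Submodule.finrank_add_eq_of_isCompl h2
      rw [nV] at this
      have h1' : finrank K ↥p.2 = n - k := h1
      exact ⟨by show finrank K ↥p.1 = k; omega, h2⟩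
  have hTnk : Ts.ncard = Gnk.ncard * c := by
    rw [hTs2]
    have := aux_card_pairs_snd Gnk (n - k) (fun B hB => hB)
    rw [nV, hexp] at this
    exact this
  have hGG : Gk.ncard = Gnk.ncard :=
    Nat.eq_of_mul_eq_mul_right hcpos (hTk.symm.trans hTnk)
  have hGkcard : Gk.ncard = gauss q n k := by
    rw [← Nat.card_coe_set_eq]
    have h := aux_card_grass (K := K) (V := Fin n → K) k (by rw [nV]; omega)
    rw [nV, hq] at h
    exact h
  set TX : Set (Submodule K (Fin n → K) × Submodule K (Fin n → K)) :=
    {p | p.1 ∈ X ∧ IsCompl p.1 p.2} with hTXd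
  set TY : Set (Submodule K (Fin n → K) × Submodule K (Fin n → K)) :=
    {p | p.2 ∈ Y ∧ IsCompl p.1 p.2} with hTYd
  have hTX : TX.ncard = X.ncard * c := by
    have := aux_card_pairs_fst X k (fun A hA => hA.2)
    rw [nV] at this
    exact this
  have hTY : TY.ncard = Y.ncard * c := by
    have := aux_card_pairs_snd Y (n - k) (fun B hB => hB.2)
    rw [nV, hexp] at this
    exact this
  have hdisjXY : Disjoint TX TY := by
    rw [Set.disjoint_left]
    rintro p ⟨h1, h2⟩ ⟨h3, _⟩
    exact hcross p.1 h1 p.2 h3 h2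
  have hsub : TX ∪ TY ⊆ Ts := by
    rintro p (⟨h1, h2⟩ | ⟨h1, h2⟩)
    · exact ⟨h1.2, h2⟩
    · have := Submodule.finrank_add_eq_of_isCompl h2
      rw [nV] at this
      have h1' : finrank K ↥p.2 = n - k := h1.2
      exact ⟨by show finrank K ↥p.1 = k; omega, h2⟩
  have hmain : X.ncard * c + Y.ncard * c ≤ Gk.ncard * c := by
    rw [← hTX, ← hTY, ← hTk, ← Set.ncard_union_eq hdisjXY (Set.toFinite _) (Set.toFinite _)]
    exact Set.ncard_le_ncard hsub (Set.toFinite _)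
  have hle : X.ncard + Y.ncard ≤ gauss q n k := by
    rw [← hGkcard]
    exact Nat.le_of_mul_le_mul_right (by rw [← add_mul] at hmain; exact hmain) hcpos
  refine ⟨hle, ?_, ?_⟩
  · -- equality implies extremal structure
    intro heq
    by_cases hYe : Y = ∅
    · left
      refine ⟨?_, hYe⟩
      apply Set.eq_of_subset_of_ncard_le (fun A hA => hA.2)
      · rw [hGkcard]
        rw [hYe, Set.ncard_empty, add_zero] at heq
        omega
    · right
      obtain ⟨B₂, hB₂⟩ := Set.nonempty_iff_ne_empty.mpr hYe
      have hcover : ∀ A B : Submodule K (Fin n → K), finrank K ↥A = k → IsCompl A B →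
          A ∈ X ∨ B ∈ Y := by
        intro A B hA hAB
        have hunion : TX ∪ TY = Ts := by
          apply Set.eq_of_subset_of_ncard_le hsub
          · rw [Set.ncard_union_eq hdisjXY (Set.toFinite _) (Set.toFinite _), hTX, hTY, hTk,
              hGkcard, ← add_mul, heq]
        have hmem : (A, B) ∈ Ts := ⟨hA, hAB⟩
        rw [← hunion] at hmem
        rcases hmem with h | h
        · exact Or.inl h.1
        · exact Or.inr h.1
      have hXe : X = ∅ := by
        rw [Set.eq_empty_iff_forall_notMem]
        intro A₀ hA₀
        obtain ⟨B₁, hc1⟩ := Submodule.exists_isCompl A₀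
        have hrB₁ : finrank K ↥B₁ = n - k := by
          have h := Submodule.finrank_add_eq_of_isCompl hc1
          rw [nV] at h
          have hA₀r : finrank K ↥A₀ = k := hA₀.2
          omega
        have hB₁Y : B₁ ∉ Y := fun hB₁Y => hcross A₀ hA₀ B₁ hB₁Y hc1
        have hrB₂ : finrank K ↥B₂ = n - k := hB₂.2
        obtain ⟨C, hcB₁, hcB₂⟩ := common_compl (hrB₁.trans hrB₂.symm)
        have hrC : finrank K ↥C = k := by
          have h := Submodule.finrank_add_eq_of_isCompl hcB₁
          rw [nV] at h
          omega
        rcases hcover C B₁ hrC hcB₁.symm with hCX | hB1Y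
        · exact hcross C hCX B₂ hB₂ hcB₂.symm
        · exact hB₁Y hB1Y
      refine ⟨hXe, ?_⟩
      apply Set.eq_of_subset_of_ncard_le (fun B hB => hB.2)
      · rw [hXe, Set.ncard_empty, zero_add] at heq
        have : Gnk.ncard = gauss q n k := by rw [← hGG, hGkcard]
        omega
  · -- extremal structure implies equality
    rintro (⟨h1, h2⟩ | ⟨h1, h2⟩)
    · rw [h1, h2, Set.ncard_empty, add_zero]
      exact hGkcard
    · rw [h1, h2, Set.ncard_empty, zero_add, ← hGG]
      exact hGkcard
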